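/- Let d ≥ 1, let k ≥ 1 be an integer, and let K : ℝ^d × ℝ^d → ℂ satisfy the uniform quantitative positivity condition for balls. Let b ∈ L^k_loc(ℝ^d;ℝ) be such that (x,y) ↦ |b(x) − b(y)|^k·|K(x,y)| is integrable on B̃ × B for all balls B, B̃ of equal radius r with dist(B,B̃) ≥ r. Let 1 < p ≤ q < ∞, set α := (d/k)(1/p − 1/q), and suppose that for some Θ ≥ 0 the bound |∬ (b(x) − b(y))^k K(x,y) f(y) g(x) dy dx| ≤ Θ·‖f‖_∞·|B|^{1/p}·‖g‖_∞·|B̃|^{1/q'} (1/q' = 1 − 1/q) holds whenever f ∈ L^∞(B) and g ∈ L^∞(B̃) for balls B, B̃ of equal radius r with dist(B,B̃) ≥ r. Then there is a constant C depending only on d, p, q, k and the positivity constants such that: if α = 0 then (sup over balls B of ⨍_B |b − ⨍_B b|)^k ≤ C·Θ; if 0 < α ≤ 1 then b agrees a.e. with a function satisfying |b(x) − b(y)|^k ≤ C·Θ·|x − y|^{αk} for all x, y; and if α > 1 then b is a.e. constant. -/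

import Mathlib

open MeasureTheory Metric Filter

/-- `K` satisfies the uniform quantitative positivity condition for balls, with constants
`c1 > 0`, `C1 ≥ 3`: for every ball `B = B(y₀,r)` there is a ball `B̃ = B(x₀,r)` with
`r ≤ dist(B,B̃) ≤ C1·r` (equivalently `3r ≤ dist(x₀,y₀) ≤ (C1+2)r`) and a unimodular `σ`
with `Re(σK(x,y)) ≥ c1/|B|` on `B̃ × B`. -/
def UnifQuantPositivityBalls (d : ℕ)
    (K : EuclideanSpace ℝ (Fin d) → EuclideanSpace ℝ (Fin d) → ℂ) (c1 C1 : ℝ) : Prop :=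
  ∀ (y0 : EuclideanSpace ℝ (Fin d)) (r : ℝ), 0 < r →
    ∃ (x0 : EuclideanSpace ℝ (Fin d)) (σ : ℂ), ‖σ‖ = 1 ∧
      3 * r ≤ dist x0 y0 ∧ dist x0 y0 ≤ (C1 + 2) * r ∧
      ∀ x ∈ ball x0 r, ∀ y ∈ ball y0 r,
        c1 / (volume (ball y0 r)).toReal ≤ (σ * K x y).re

open scoped ENNReal Topology

noncomputable section

private lemma exists_median {X : Type*} [MeasurableSpace X] (μ : Measure X) [IsFiniteMeasure μ]
    (f : X → ℝ) (hf : Measurable f) :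
    ∃ m : ℝ, μ Set.univ ≤ 2 * μ {x | m ≤ f x} ∧ μ Set.univ ≤ 2 * μ {x | f x ≤ m} := by
  rcases eq_or_ne (μ Set.univ) 0 with h0 | h0
  · exact ⟨0, by simp [h0], by simp [h0]⟩
  have htop : μ Set.univ ≠ ⊤ := measure_ne_top μ _
  have htop2 : μ Set.univ / 2 ≠ ⊤ := ne_top_of_le_ne_top htop ENNReal.half_le_self
  set S : Set ℝ := {t : ℝ | μ {x | t < f x} ≤ μ Set.univ / 2} with hS
  have hSup : ∀ ⦃t t' : ℝ⦄, t ∈ S → t ≤ t' → t' ∈ S := by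
    intro t t' ht htt'
    exact le_trans (measure_mono (fun x hx => lt_of_le_of_lt htt' hx)) ht
  -- S is nonempty
  have hne : S.Nonempty := by
    have hmono : Antitone (fun n : ℕ => {x | (n : ℝ) < f x}) := by
      intro n m hnm x hx
      simp only [Set.mem_setOf_eq] at hx ⊢
      exact lt_of_le_of_lt (Nat.cast_le.2 hnm) hx
    have hint : (⋂ n : ℕ, {x | (n : ℝ) < f x}) = ∅ := by
      ext x
      simp only [Set.mem_iInter, Set.mem_setOf_eq, Set.mem_empty_iff_false, iff_false, not_forall,
        not_lt]
      obtain ⟨n, hn⟩ := exists_nat_ge (f x)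
      exact ⟨n, hn⟩
    have htend := tendsto_measure_iInter_atTop
      (μ := μ) (s := fun n : ℕ => {x | (n : ℝ) < f x})
      (fun n => (hf measurableSet_Ioi).nullMeasurableSet) hmono ⟨0, measure_ne_top μ _⟩
    rw [hint] at htend
    simp only [measure_empty] at htend
    have hpos : (0 : ℝ≥0∞) < μ Set.univ / 2 := ENNReal.div_pos h0 (by norm_num)
    obtain ⟨n, hn⟩ := (htend.eventually_le_const hpos).exists
    exact ⟨n, hn⟩
  -- S is bounded below
  have hbdd : BddBelow S := by
    have hmono : Monotone (fun n : ℕ => {x | (-(n : ℝ)) < f x}) := by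
      intro n m hnm x hx
      simp only [Set.mem_setOf_eq] at hx ⊢
      have : (-(m:ℝ)) ≤ -(n:ℝ) := by
        simp only [neg_le_neg_iff]; exact_mod_cast hnm
      exact lt_of_le_of_lt this hx
    have hunion : (⋃ n : ℕ, {x | (-(n : ℝ)) < f x}) = Set.univ := by
      ext x
      simp only [Set.mem_iUnion, Set.mem_setOf_eq, Set.mem_univ, iff_true]
      obtain ⟨n, hn⟩ := exists_nat_gt (-f x)
      exact ⟨n, by linarith⟩
    have htend := tendsto_measure_iUnion_atTop (μ := μ)
      (s := fun n : ℕ => {x | (-(n : ℝ)) < f x}) hmono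
    rw [hunion] at htend
    have hhalf : μ Set.univ / 2 < μ Set.univ := ENNReal.half_lt_self h0 htop
    obtain ⟨n, hn⟩ := (htend.eventually_const_lt hhalf).exists
    refine ⟨-(n : ℝ), fun t ht => ?_⟩
    by_contra hlt
    push_neg at hlt
    have : (-(n : ℝ)) ∈ S := hSup ht hlt.le
    exact absurd this (by simpa [hS] using hn.not_ge)
  set m := sInf S with hm
  refine ⟨m, ?_, ?_⟩
  · -- lower bound on {m ≤ f}
    have hseq : ∀ n : ℕ, μ Set.univ / 2 ≤ μ {x | m - 1/(n+1) < f x} := by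
      intro n
      have hp : (0:ℝ) < 1/((n:ℝ)+1) := by positivity
      have hnotin : m - 1/(n+1) ∉ S := fun hIn =>
        absurd (csInf_le hbdd hIn) (by rw [← hm]; push_neg; linarith)
      simp only [hS, Set.mem_setOf_eq, not_le] at hnotin
      exact hnotin.le
    have hmono : Antitone (fun n : ℕ => {x | m - 1/(n+1) < f x}) := by
      intro n k hnk x hx
      simp only [Set.mem_setOf_eq] at hx ⊢
      have : (1:ℝ)/(k+1) ≤ 1/(n+1) := by
        apply one_div_le_one_div_of_le (by positivity)
        have : (n:ℝ) ≤ k := by exact_mod_cast hnk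
        linarith
      refine lt_of_le_of_lt ?_ hx
      linarith
    have hint : (⋂ n : ℕ, {x | m - 1/(n+1) < f x}) = {x | m ≤ f x} := by
      ext x
      simp only [Set.mem_iInter, Set.mem_setOf_eq]
      constructor
      · intro h
        by_contra hlt
        push_neg at hlt
        obtain ⟨n, hn⟩ := exists_nat_gt (1 / (m - f x))
        have hpos : 0 < m - f x := by linarith
        have h1 : 1 / (m - f x) < (n:ℝ) + 1 := by linarith [hn]
        have : 1 / ((n:ℝ)+1) < m - f x := by
          rw [div_lt_iff₀ (by positivity)] at h1 ⊢
          nlinarith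
        linarith [h n]
      · intro h n
        have : (0:ℝ) < 1/((n:ℝ)+1) := by positivity
        linarith
    have htend := tendsto_measure_iInter_atTop (μ := μ)
      (s := fun n : ℕ => {x | m - 1/(n+1) < f x})
      (fun n => (hf measurableSet_Ioi).nullMeasurableSet) hmono ⟨0, measure_ne_top μ _⟩
    rw [hint] at htend
    have hge := ge_of_tendsto htend (Eventually.of_forall hseq)
    calc μ Set.univ = 2 * (μ Set.univ / 2) := by
          rw [ENNReal.mul_div_cancel (by norm_num) (by norm_num)]
      _ ≤ 2 * μ {x | m ≤ f x} := mul_le_mul_right hge 2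
  · -- lower bound on {f ≤ m}
    have hseq : ∀ n : ℕ, μ Set.univ / 2 ≤ μ {x | f x ≤ m + 1/(n+1)} := by
      intro n
      have hp : (0:ℝ) < 1/((n:ℝ)+1) := by positivity
      obtain ⟨s, hsS, hs⟩ := (csInf_lt_iff hbdd hne).mp
        (show sInf S < m + 1/(n+1) by rw [← hm]; linarith)
      have hcompl : μ {x | f x ≤ s} + μ {x | s < f x} = μ Set.univ := by
        have hset : {x | s < f x} = {x | f x ≤ s}ᶜ := by ext x; simp [not_le]
        rw [hset]
        exact measure_add_measure_compl (hf measurableSet_Iic)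
      have h2 : μ Set.univ / 2 ≤ μ {x | f x ≤ s} := by
        have hsum : μ Set.univ ≤ μ {x | f x ≤ s} + μ Set.univ / 2 := by
          conv_lhs => rw [← hcompl]
          exact add_le_add_right hsS _
        exact (ENNReal.add_le_add_iff_right htop2).mp
          (by rw [ENNReal.add_halves]; exact hsum)
      exact le_trans h2 (measure_mono (fun x hx => le_trans hx hs.le))
    have hmono : Antitone (fun n : ℕ => {x | f x ≤ m + 1/(n+1)}) := by
      intro n k hnk x hx
      simp only [Set.mem_setOf_eq] at hx ⊢
      have : (1:ℝ)/(k+1) ≤ 1/(n+1) := by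
        apply one_div_le_one_div_of_le (by positivity)
        have : (n:ℝ) ≤ k := by exact_mod_cast hnk
        linarith
      linarith
    have hint : (⋂ n : ℕ, {x | f x ≤ m + 1/(n+1)}) = {x | f x ≤ m} := by
      ext x
      simp only [Set.mem_iInter, Set.mem_setOf_eq]
      constructor
      · intro h
        by_contra hlt
        push_neg at hlt
        obtain ⟨n, hn⟩ := exists_nat_gt (1 / (f x - m))
        have hpos : 0 < f x - m := by linarith
        have h1 : 1 / (f x - m) < (n:ℝ) + 1 := by linarith [hn]
        have : 1 / ((n:ℝ)+1) < f x - m := by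
          rw [div_lt_iff₀ (by positivity)] at h1 ⊢
          nlinarith
        linarith [h n]
      · intro h n
        have : (0:ℝ) < 1/((n:ℝ)+1) := by positivity
        linarith
    have htend := tendsto_measure_iInter_atTop (μ := μ)
      (s := fun n : ℕ => {x | f x ≤ m + 1/(n+1)})
      (fun n => (hf measurableSet_Iic).nullMeasurableSet) hmono ⟨0, measure_ne_top μ _⟩
    rw [hint] at htend
    have hge := ge_of_tendsto htend (Eventually.of_forall hseq)
    calc μ Set.univ = 2 * (μ Set.univ / 2) := by
          rw [ENNReal.mul_div_cancel (by norm_num) (by norm_num)]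
      _ ≤ 2 * μ {x | f x ≤ m} := mul_le_mul_right hge 2


set_option maxHeartbeats 1000000 in
lemma osc_bound (d k : ℕ) (hk : 1 ≤ k)
    (K : EuclideanSpace ℝ (Fin d) → EuclideanSpace ℝ (Fin d) → ℂ)
    (hKmeas : Measurable fun z : EuclideanSpace ℝ (Fin d) × EuclideanSpace ℝ (Fin d) => K z.1 z.2)
    (c1 C1 : ℝ) (hc1 : 0 < c1)
    (hpos : UnifQuantPositivityBalls d K c1 C1)
    (p q : ℝ)
    (b : EuclideanSpace ℝ (Fin d) → ℝ) (Θ : ℝ) (hb : Measurable b)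
    (hIntc : ∀ (c : ℝ) (z : EuclideanSpace ℝ (Fin d)) (ρ : ℝ),
      IntegrableOn (fun x => |b x - c| ^ k) (ball z ρ) volume)
    (habs : ∀ (y0 x0 : EuclideanSpace ℝ (Fin d)) (r : ℝ), 0 < r → 3 * r ≤ dist y0 x0 →
      IntegrableOn
        (fun z : EuclideanSpace ℝ (Fin d) × EuclideanSpace ℝ (Fin d) =>
          |b z.1 - b z.2| ^ k * ‖K z.1 z.2‖)
        ((ball x0 r) ×ˢ (ball y0 r)) volume)
    (hweak : ∀ (y0 x0 : EuclideanSpace ℝ (Fin d)) (r : ℝ), 0 < r → 3 * r ≤ dist y0 x0 →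
      ∀ (f g : EuclideanSpace ℝ (Fin d) → ℂ) (Mf Mg : ℝ),
        Measurable f → Measurable g →
        (∀ x ∉ ball y0 r, f x = 0) → (∀ x ∉ ball x0 r, g x = 0) →
        (∀ x, ‖f x‖ ≤ Mf) → (∀ x, ‖g x‖ ≤ Mg) →
        ‖∫ x in ball x0 r, ∫ y in ball y0 r,
            (((b x - b y) ^ k : ℝ) : ℂ) * K x y * f y * g x‖
          ≤ Θ * (Mf * (volume (ball y0 r)).toReal ^ (1 / p))
              * (Mg * (volume (ball x0 r)).toReal ^ (1 - 1 / q)))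
    (z : EuclideanSpace ℝ (Fin d)) (ρ : ℝ) (hρ : 0 < ρ) :
    ∃ m : ℝ, ∫ x in ball z ρ, |b x - m| ^ k ≤
      4 / c1 * Θ * ((volume (ball z ρ)).toReal ^ (1 / p)
        * (volume (ball z ρ)).toReal ^ (1 - 1 / q)) := by
  classical
  obtain ⟨x0, σ, hσ, h3, _, hK⟩ := hpos z ρ hρ
  have hdist : 3 * ρ ≤ dist z x0 := by rwa [dist_comm]
  set B : Set (EuclideanSpace ℝ (Fin d)) := ball z ρ with hB
  set B' : Set (EuclideanSpace ℝ (Fin d)) := ball x0 ρ with hB'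
  have hVeq : volume B' = volume B := by
    rw [hB, hB', Measure.addHaar_ball_center volume x0 ρ,
      Measure.addHaar_ball_center volume z ρ]
  have hV0 : volume B ≠ 0 := (measure_ball_pos volume z hρ).ne'
  have hVtop : volume B ≠ ⊤ := measure_ball_lt_top.ne
  set Vt : ℝ := (volume B).toReal with hVt
  have hVtpos : 0 < Vt := ENNReal.toReal_pos hV0 hVtop
  -- median of b on B'
  haveI : IsFiniteMeasure (volume.restrict B') :=
    ⟨by rw [Measure.restrict_apply_univ]; rw [hVeq]; exact hVtop.lt_top⟩
  obtain ⟨m, hm1, hm2⟩ := exists_median (volume.restrict B') b hb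
  rw [Measure.restrict_apply_univ] at hm1 hm2
  rw [Measure.restrict_apply
    (show MeasurableSet {x : EuclideanSpace ℝ (Fin d) | m ≤ b x} from hb measurableSet_Ici)] at hm1
  rw [Measure.restrict_apply
    (show MeasurableSet {x : EuclideanSpace ℝ (Fin d) | b x ≤ m} from hb measurableSet_Iic)] at hm2
  -- the key claim
  have claim : ∀ (S T : Set (EuclideanSpace ℝ (Fin d))), MeasurableSet S → MeasurableSet T →
      S ⊆ B' → T ⊆ B → ∀ ε : ℝ, |ε| = 1 →
      (∀ x ∈ S, ∀ y ∈ T, |b y - m| ^ k ≤ ε * (b x - b y) ^ k) →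
      c1 / Vt * (volume S).toReal * ∫ y in T, |b y - m| ^ k ≤
        Θ * (volume B).toReal ^ (1 / p) * (volume B).toReal ^ (1 - 1 / q) := by
    intro S T hSm hTm hSsub hTsub ε hε hsign
    set f : EuclideanSpace ℝ (Fin d) → ℂ := T.indicator (fun _ => (ε : ℂ)) with hf
    set g : EuclideanSpace ℝ (Fin d) → ℂ := S.indicator (fun _ => σ) with hg
    have hfm : Measurable f := (measurable_const.indicator hTm)
    have hgm : Measurable g := (measurable_const.indicator hSm)
    have hfb : ∀ x, ‖f x‖ ≤ 1 := by
      intro x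
      rw [hf]
      by_cases hx : x ∈ T
      · rw [Set.indicator_of_mem hx]
        simp [hε]
      · rw [Set.indicator_of_notMem hx]; simp
    have hgb : ∀ x, ‖g x‖ ≤ 1 := by
      intro x
      rw [hg]
      by_cases hx : x ∈ S
      · rw [Set.indicator_of_mem hx]; rw [hσ]
      · rw [Set.indicator_of_notMem hx]; simp
    have hfz : ∀ x ∉ B, f x = 0 := fun x hx =>
      Set.indicator_of_notMem (fun hc => hx (hTsub hc)) _
    have hgz : ∀ x ∉ B', g x = 0 := fun x hx =>
      Set.indicator_of_notMem (fun hc => hx (hSsub hc)) _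
    have hW := hweak z x0 ρ hρ hdist f g 1 1 hfm hgm hfz hgz hfb hgb
    rw [one_mul, one_mul] at hW
    rw [← hVeq] at hW
    rw [hVeq] at hW
    -- Φ and its integrability
    set Φ : EuclideanSpace ℝ (Fin d) × EuclideanSpace ℝ (Fin d) → ℂ :=
      fun w => (((b w.1 - b w.2) ^ k : ℝ) : ℂ) * K w.1 w.2 * f w.2 * g w.1 with hΦ
    have hdom := habs z x0 ρ hρ hdist
    have hΦmeas : Measurable Φ := by
      apply Measurable.mul
      apply Measurable.mul
      apply Measurable.mul
      · exact Complex.measurable_ofReal.comp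
          (((hb.comp measurable_fst).sub (hb.comp measurable_snd)).pow_const k)
      · exact hKmeas
      · exact hfm.comp measurable_snd
      · exact hgm.comp measurable_fst
    have hΦint : IntegrableOn Φ (B' ×ˢ B) volume := by
      apply Integrable.mono' hdom hΦmeas.aestronglyMeasurable.restrict
      · refine Eventually.of_forall (fun w => ?_)
        rw [hΦ]
        simp only [norm_mul]
        rw [Complex.norm_real, Real.norm_eq_abs]
        have h1 : |(b w.1 - b w.2) ^ k| = |b w.1 - b w.2| ^ k := abs_pow _ _
        rw [h1]
        calc |b w.1 - b w.2| ^ k * ‖K w.1 w.2‖ * ‖f w.2‖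
              * ‖g w.1‖
            ≤ |b w.1 - b w.2| ^ k * ‖K w.1 w.2‖ * 1 * 1 := by
              apply mul_le_mul ?_ (hgb w.1) (norm_nonneg _) ?_
              · apply mul_le_mul le_rfl (hfb w.2) (norm_nonneg _)
                positivity
              · positivity
          _ = |b w.1 - b w.2| ^ k * ‖K w.1 w.2‖ := by ring
    -- rewrite iterated integral as product integral
    have hΦint' : Integrable Φ ((volume.restrict B').prod (volume.restrict B)) := by
      rw [Measure.prod_restrict, ← Measure.volume_eq_prod]
      exact hΦint
    have hiter : ∫ x in B', ∫ y in B, Φ (x, y) = ∫ w, Φ w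
        ∂((volume.restrict B').prod (volume.restrict B)) :=
      (integral_prod Φ hΦint').symm
    -- the lower bound ψ
    set F : EuclideanSpace ℝ (Fin d) × EuclideanSpace ℝ (Fin d) → ℝ :=
      fun w => c1 / Vt * |b w.2 - m| ^ k with hF
    set ψ := (S ×ˢ T).indicator F with hψ
    have hψle : ∀ w, ψ w ≤ (Φ w).re := by
      intro w
      by_cases hw : w ∈ S ×ˢ T
      · rw [hψ, Set.indicator_of_mem hw]
        obtain ⟨hw1, hw2⟩ := hw
        have hfw : f w.2 = (ε : ℂ) := Set.indicator_of_mem hw2 _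
        have hgw : g w.1 = σ := Set.indicator_of_mem hw1 _
        have hΦw : Φ w = (((ε * (b w.1 - b w.2) ^ k : ℝ)) : ℂ) * (σ * K w.1 w.2) := by
          simp only [hΦ, hfw, hgw]
          push_cast
          ring
        rw [hΦw]
        rw [Complex.re_ofReal_mul]
        have hKw := hK w.1 (hSsub hw1) w.2 (hTsub hw2)
        have hsw := hsign w.1 hw1 w.2 hw2
        have h0 : (0:ℝ) ≤ |b w.2 - m| ^ k := by positivity
        have h1 : (0:ℝ) ≤ c1 / Vt := by positivity
        calc c1 / Vt * |b w.2 - m| ^ k = |b w.2 - m| ^ k * (c1 / Vt) := by ring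
          _ ≤ (ε * (b w.1 - b w.2) ^ k) * (σ * K w.1 w.2).re :=
              mul_le_mul hsw hKw h1 (le_trans h0 hsw)
      · rw [hψ, Set.indicator_of_notMem hw]
        have : Φ w = 0 := by
          rw [Set.mem_prod] at hw
          push_neg at hw
          by_cases hw1 : w.1 ∈ S
          · have hw2 := hw hw1
            simp only [hΦ, hf]
            rw [Set.indicator_of_notMem hw2]
            ring
          · simp only [hΦ, hg]
            rw [Set.indicator_of_notMem hw1]
            ring
        rw [this]
        simp
    -- integrability of ψ
    have hTint : IntegrableOn (fun y => |b y - m| ^ k) T volume :=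
      (hIntc m z ρ).mono_set hTsub
    have hSfin : volume S < ⊤ := lt_of_le_of_lt (measure_mono hSsub)
      (by rw [hVeq]; exact hVtop.lt_top)
    have hFint : Integrable F ((volume.restrict S).prod (volume.restrict T)) := by
      have h1 : Integrable (fun _ : EuclideanSpace ℝ (Fin d) => (1:ℝ)) (volume.restrict S) :=
        integrableOn_const hSfin.ne
      have h2 : Integrable (fun y => c1 / Vt * |b y - m| ^ k) (volume.restrict T) :=
        (hTint.const_mul _)
      have := h1.mul_prod h2
      simpa [hF] using this
    have hψint0 : Integrable ψ (volume.prod volume) := by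
      have : IntegrableOn F (S ×ˢ T) (volume.prod volume) := by
        rw [IntegrableOn, ← Measure.prod_restrict]
        exact hFint
      exact this.integrable_indicator (hSm.prod hTm)
    have hψint : Integrable ψ ((volume.restrict B').prod (volume.restrict B)) := by
      rw [Measure.prod_restrict]
      exact hψint0.restrict
    -- value of ∫ ψ
    have hψval : ∫ w, ψ w ∂((volume.restrict B').prod (volume.restrict B)) =
        (volume S).toReal * (c1 / Vt * ∫ y in T, |b y - m| ^ k) := by
      have hSTsub : (S ×ˢ T) ⊆ (B' ×ˢ B) := Set.prod_mono hSsub hTsub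
      rw [Measure.prod_restrict]
      rw [hψ, integral_indicator (hSm.prod hTm)]
      rw [Measure.restrict_restrict (hSm.prod hTm), Set.inter_eq_self_of_subset_left hSTsub]
      rw [← Measure.prod_restrict]
      rw [integral_prod F hFint]
      have hinner : ∀ x : EuclideanSpace ℝ (Fin d),
          (∫ y in T, F (x, y)) = c1 / Vt * ∫ y in T, |b y - m| ^ k := by
        intro x
        simp only [hF]
        rw [integral_const_mul]
      simp only [hinner]
      rw [setIntegral_const, smul_eq_mul, measureReal_def]
    -- re of Φ integral
    have hre : ∫ w, (Φ w).re ∂((volume.restrict B').prod (volume.restrict B)) =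
        (∫ w, Φ w ∂((volume.restrict B').prod (volume.restrict B))).re := by
      simpa only [RCLike.re_to_complex] using integral_re hΦint'
    have hmono : ∫ w, ψ w ∂((volume.restrict B').prod (volume.restrict B)) ≤
        ∫ w, (Φ w).re ∂((volume.restrict B').prod (volume.restrict B)) :=
      integral_mono hψint hΦint'.re (fun w => hψle w)
    have hfinal : (volume S).toReal * (c1 / Vt * ∫ y in T, |b y - m| ^ k) ≤
        Θ * (volume B).toReal ^ (1 / p) * (volume B).toReal ^ (1 - 1 / q) := by
      calc (volume S).toReal * (c1 / Vt * ∫ y in T, |b y - m| ^ k)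
          = ∫ w, ψ w ∂((volume.restrict B').prod (volume.restrict B)) := hψval.symm
        _ ≤ ∫ w, (Φ w).re ∂((volume.restrict B').prod (volume.restrict B)) := hmono
        _ = (∫ w, Φ w ∂((volume.restrict B').prod (volume.restrict B))).re := hre
        _ = (∫ x in B', ∫ y in B, Φ (x, y)).re := by rw [hiter]
        _ ≤ ‖∫ x in B', ∫ y in B, Φ (x, y)‖ := Complex.re_le_norm _
        _ ≤ Θ * (volume B).toReal ^ (1 / p) * (volume B).toReal ^ (1 - 1 / q) := by
            exact hW
    calc c1 / Vt * (volume S).toReal * ∫ y in T, |b y - m| ^ k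
        = (volume S).toReal * (c1 / Vt * ∫ y in T, |b y - m| ^ k) := by ring
      _ ≤ _ := hfinal
  -- apply the claim twice
  set S1 : Set (EuclideanSpace ℝ (Fin d)) := {x | m ≤ b x} ∩ B' with hS1
  set T1 : Set (EuclideanSpace ℝ (Fin d)) := {y | b y ≤ m} ∩ B with hT1
  set S2 : Set (EuclideanSpace ℝ (Fin d)) := {x | b x ≤ m} ∩ B' with hS2
  set T2 : Set (EuclideanSpace ℝ (Fin d)) := {y | m ≤ b y} ∩ B with hT2
  have hS1m : MeasurableSet S1 := (hb measurableSet_Ici).inter measurableSet_ball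
  have hT1m : MeasurableSet T1 := (hb measurableSet_Iic).inter measurableSet_ball
  have hS2m : MeasurableSet S2 := (hb measurableSet_Iic).inter measurableSet_ball
  have hT2m : MeasurableSet T2 := (hb measurableSet_Ici).inter measurableSet_ball
  have hsign1 : ∀ x ∈ S1, ∀ y ∈ T1, |b y - m| ^ k ≤ (1:ℝ) * (b x - b y) ^ k := by
    intro x hx y hy
    rw [one_mul]
    have hxm : m ≤ b x := hx.1
    have hym : b y ≤ m := hy.1
    have : |b y - m| = m - b y := by rw [abs_sub_comm]; exact abs_of_nonneg (by linarith)
    rw [this]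
    exact pow_le_pow_left₀ (by linarith) (by linarith) k
  have hsign2 : ∀ x ∈ S2, ∀ y ∈ T2, |b y - m| ^ k ≤ ((-1:ℝ)) ^ k * (b x - b y) ^ k := by
    intro x hx y hy
    have hxm : b x ≤ m := hx.1
    have hym : m ≤ b y := hy.1
    rw [← mul_pow]
    have : |b y - m| = b y - m := abs_of_nonneg (by linarith)
    rw [this]
    have h2 : (-1:ℝ) * (b x - b y) = b y - b x := by ring
    rw [h2]
    exact pow_le_pow_left₀ (by linarith) (by linarith) k
  have hc1' := claim S1 T1 hS1m hT1m Set.inter_subset_right Set.inter_subset_right 1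
    (by norm_num) hsign1
  have hc2' := claim S2 T2 hS2m hT2m Set.inter_subset_right Set.inter_subset_right ((-1:ℝ)^k)
    (by rw [abs_pow]; simp) hsign2
  -- measures of S1, S2 are at least half of Vt
  have hS1ge : Vt / 2 ≤ (volume S1).toReal := by
    have h2 : volume B ≤ 2 * volume S1 := by rw [← hVeq]; exact hm1
    have hS1top : volume S1 ≠ ⊤ :=
      (lt_of_le_of_lt (measure_mono Set.inter_subset_right)
        (by rw [hVeq]; exact hVtop.lt_top)).ne
    have := ENNReal.toReal_mono (ENNReal.mul_ne_top (by norm_num) hS1top) h2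
    rw [ENNReal.toReal_mul, ENNReal.toReal_ofNat] at this
    rw [hVt]
    linarith
  have hS2ge : Vt / 2 ≤ (volume S2).toReal := by
    have h2 : volume B ≤ 2 * volume S2 := by rw [← hVeq]; exact hm2
    have hS2top : volume S2 ≠ ⊤ :=
      (lt_of_le_of_lt (measure_mono Set.inter_subset_right)
        (by rw [hVeq]; exact hVtop.lt_top)).ne
    have := ENNReal.toReal_mono (ENNReal.mul_ne_top (by norm_num) hS2top) h2
    rw [ENNReal.toReal_mul, ENNReal.toReal_ofNat] at this
    rw [hVt]
    linarith
  -- nonnegativity of integrals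
  have hT1int : IntegrableOn (fun y => |b y - m| ^ k) T1 volume :=
    (hIntc m z ρ).mono_set Set.inter_subset_right
  have hT2int : IntegrableOn (fun y => |b y - m| ^ k) T2 volume :=
    (hIntc m z ρ).mono_set Set.inter_subset_right
  have hI1pos : 0 ≤ ∫ y in T1, |b y - m| ^ k :=
    setIntegral_nonneg hT1m (fun y _ => by positivity)
  have hI2pos : 0 ≤ ∫ y in T2, |b y - m| ^ k :=
    setIntegral_nonneg hT2m (fun y _ => by positivity)
  set R : ℝ := Θ * (volume B).toReal ^ (1 / p) * (volume B).toReal ^ (1 - 1 / q) with hR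
  -- deduce bounds on each integral
  have hkey : ∀ (S T : Set (EuclideanSpace ℝ (Fin d))), Vt / 2 ≤ (volume S).toReal →
      0 ≤ (∫ y in T, |b y - m| ^ k) →
      c1 / Vt * (volume S).toReal * ∫ y in T, |b y - m| ^ k ≤ R →
      ∫ y in T, |b y - m| ^ k ≤ 2 / c1 * R := by
    intro S T hSge hIpos hcl
    have h1 : c1 / Vt * (Vt / 2) * ∫ y in T, |b y - m| ^ k ≤
        c1 / Vt * (volume S).toReal * ∫ y in T, |b y - m| ^ k := by
      apply mul_le_mul_of_nonneg_right _ hIpos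
      apply mul_le_mul_of_nonneg_left hSge (by positivity)
    have h2 : c1 / Vt * (Vt / 2) = c1 / 2 := by field_simp
    rw [h2] at h1
    have h3 : c1 / 2 * ∫ y in T, |b y - m| ^ k ≤ R := le_trans h1 hcl
    rw [div_mul_eq_mul_div, div_le_iff₀ (by norm_num : (0:ℝ) < 2)] at h3
    rw [div_mul_eq_mul_div, le_div_iff₀ hc1]
    linarith
  have hI1 := hkey S1 T1 hS1ge hI1pos hc1'
  have hI2 := hkey S2 T2 hS2ge hI2pos hc2'
  -- combine
  refine ⟨m, ?_⟩
  have hsplit : ∫ y in B, |b y - m| ^ k ≤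
      (∫ y in T1, |b y - m| ^ k) + ∫ y in T2, |b y - m| ^ k := by
    have hBint : IntegrableOn (fun y => |b y - m| ^ k) B volume := hIntc m z ρ
    have hcover : B = T1 ∪ (T2 \ T1) := by
      apply Set.eq_of_subset_of_subset
      · intro y hy
        rcases le_total (b y) m with h | h
        · exact Or.inl ⟨h, hy⟩
        · by_cases h1 : y ∈ T1
          · exact Or.inl h1
          · exact Or.inr ⟨⟨h, hy⟩, h1⟩
      · intro y hy
        rcases hy with h | h
        · exact h.2
        · exact h.1.2
    rw [hcover]
    rw [setIntegral_union (Set.disjoint_sdiff_right) (hT2m.diff hT1m)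
      (hBint.mono_set (by rw [hcover]; exact Set.subset_union_left))
      (hBint.mono_set (by rw [hcover]; exact Set.subset_union_right))]
    apply add_le_add_right
    apply setIntegral_mono_set hT2int
    · exact Eventually.of_forall (fun y => by positivity)
    · exact HasSubset.Subset.eventuallyLE Set.diff_subset
  calc ∫ y in B, |b y - m| ^ k ≤ (2 / c1 * R) + (2 / c1 * R) := by
        refine le_trans hsplit (add_le_add hI1 hI2)
    _ = 4 / c1 * R := by ring
    _ = 4 / c1 * Θ * ((volume B).toReal ^ (1 / p) * (volume B).toReal ^ (1 - 1 / q)) := by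
        rw [hR]; ring


set_option maxHeartbeats 1000000 in
lemma campanato (d : ℕ) (α : ℝ) (hα : 0 < α) :
    ∃ C' : ℝ, 0 < C' ∧ ∀ A : ℝ, 0 ≤ A →
      ∀ b : EuclideanSpace ℝ (Fin d) → ℝ, LocallyIntegrable b volume →
      (∀ (z : EuclideanSpace ℝ (Fin d)) (ρ : ℝ), 0 < ρ →
        ∃ m : ℝ, ⨍ x in ball z ρ, |b x - m| ≤ A * ρ ^ α) →
      ∃ b' : EuclideanSpace ℝ (Fin d) → ℝ,
        (∀ᵐ x ∂(volume : Measure (EuclideanSpace ℝ (Fin d))), b x = b' x) ∧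
        ∀ x y, |b' x - b' y| ≤ C' * A * dist x y ^ α := by
  classical
  set E := EuclideanSpace ℝ (Fin d)
  set r : ℝ := ((1:ℝ)/2) ^ α with hr_def
  have hr0 : 0 < r := Real.rpow_pos_of_pos (by norm_num) α
  have hr1 : r < 1 := Real.rpow_lt_one (by norm_num) (by norm_num) hα
  set G : ℝ := (1 - r)⁻¹ with hG_def
  have hG0 : 0 < G := by rw [hG_def]; exact inv_pos.mpr (by linarith)
  set D2 : ℝ := 2^(d+1) * (1 + G) with hD2_def
  have hD20 : 0 < D2 := by positivity
  refine ⟨2 * D2 + 2^(d+2) * (2:ℝ)^α, by positivity, ?_⟩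
  intro A hA b hbl hosc
  set a : E → ℝ → ℝ := fun z ρ => ⨍ x in ball z ρ, b x with ha_def
  -- volume facts
  set v : ℝ := (volume (ball (0:E) 1)).toReal with hv_def
  have hv0 : 0 < v := ENNReal.toReal_pos (measure_ball_pos volume _ one_pos).ne'
    measure_ball_lt_top.ne
  have hvol : ∀ (x : E) (ρ : ℝ), 0 < ρ → (volume (ball x ρ)).toReal = ρ ^ d * v := by
    intro x ρ hρ
    rw [Measure.addHaar_ball_of_pos volume x hρ]
    rw [ENNReal.toReal_mul, ENNReal.toReal_ofReal (by positivity)]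
    congr 2
    exact finrank_euclideanSpace_fin
  have hIb : ∀ (z : E) (ρ : ℝ), IntegrableOn b (ball z ρ) volume := fun z ρ =>
    (hbl.integrableOn_isCompact (isCompact_closedBall z ρ)).mono_set ball_subset_closedBall
  have hIbc : ∀ (c : ℝ) (z : E) (ρ : ℝ), IntegrableOn (fun x => |b x - c|) (ball z ρ) volume := by
    intro c z ρ
    exact ((hIb z ρ).sub (integrableOn_const measure_ball_lt_top.ne)).abs
  -- |average - c| ≤ average of |b - c|
  have hmean : ∀ (z : E) (ρ : ℝ) (c : ℝ), 0 < ρ →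
      |a z ρ - c| ≤ ⨍ x in ball z ρ, |b x - c| := by
    intro z ρ c hρ
    have hV0 : (volume (ball z ρ)).toReal ≠ 0 := by
      rw [hvol z ρ hρ]; positivity
    have h1 : a z ρ - c = ((volume (ball z ρ)).toReal)⁻¹ * ∫ x in ball z ρ, (b x - c) := by
      rw [ha_def]
      simp only
      rw [setAverage_eq, integral_sub (hIb z ρ) (integrableOn_const measure_ball_lt_top.ne), setIntegral_const, smul_eq_mul, smul_eq_mul, measureReal_def]
      field_simp
      rfl
    rw [h1, setAverage_eq, smul_eq_mul]
    rw [abs_mul, abs_inv, abs_of_nonneg ENNReal.toReal_nonneg]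
    apply mul_le_mul_of_nonneg_left _ (by positivity)
    calc |∫ x in ball z ρ, (b x - c)| ≤ ∫ x in ball z ρ, |b x - c| := by
          simpa [Real.norm_eq_abs] using
            norm_integral_le_integral_norm (μ := volume.restrict (ball z ρ))
              (fun x => b x - c)
      _ ≤ ∫ x in ball z ρ, |b x - c| := le_rfl
  -- comparison of averages on nested balls
  have hcomp : ∀ (w z : E) (s ρ : ℝ), 0 < s → s ≤ ρ → ball w s ⊆ ball z ρ →
      |a w s - a z ρ| ≤ 2 * (ρ/s)^d * (A * ρ ^ α) := by
    intro w z s ρ hs hsρ hsub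
    have hρ : 0 < ρ := lt_of_lt_of_le hs hsρ
    obtain ⟨m, hm⟩ := hosc z ρ hρ
    have hVw : (volume (ball w s)).toReal = s ^ d * v := hvol w s hs
    have hVz : (volume (ball z ρ)).toReal = ρ ^ d * v := hvol z ρ hρ
    have hfrac : (s ^ d * v)⁻¹ * (ρ ^ d * v) = (ρ/s)^d := by
      rw [div_pow]
      field_simp
    have h2 : ⨍ x in ball w s, |b x - m| ≤ (ρ/s)^d * (A * ρ ^ α) := by
      rw [setAverage_eq, smul_eq_mul, measureReal_def, hVw]
      calc (s ^ d * v)⁻¹ * ∫ x in ball w s, |b x - m|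
          ≤ (s ^ d * v)⁻¹ * ∫ x in ball z ρ, |b x - m| := by
            apply mul_le_mul_of_nonneg_left _ (by positivity)
            apply setIntegral_mono_set (hIbc m z ρ)
              (Eventually.of_forall (fun x => abs_nonneg _))
              (HasSubset.Subset.eventuallyLE hsub)
        _ = (s ^ d * v)⁻¹ * ((ρ ^ d * v) * ⨍ x in ball z ρ, |b x - m|) := by
            rw [setAverage_eq, smul_eq_mul, measureReal_def, hVz]
            field_simp
        _ ≤ (s ^ d * v)⁻¹ * ((ρ ^ d * v) * (A * ρ ^ α)) := by
            apply mul_le_mul_of_nonneg_left _ (by positivity)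
            exact mul_le_mul_of_nonneg_left hm (by positivity)
        _ = (ρ/s)^d * (A * ρ ^ α) := by rw [← hfrac]; ring
    have h3 : |a w s - m| ≤ (ρ/s)^d * (A * ρ ^ α) := le_trans (hmean w s m hs) h2
    have h4 : |a z ρ - m| ≤ A * ρ ^ α := le_trans (hmean z ρ m hρ) hm
    have hratio : (1:ℝ) ≤ (ρ/s)^d := one_le_pow₀ (by
      rw [le_div_iff₀ hs]; linarith)
    calc |a w s - a z ρ| ≤ |a w s - m| + |a z ρ - m| := by
          rw [abs_sub_comm (a z ρ) m] at *
          exact abs_sub_le _ _ _ |>.trans (by rw [abs_sub_comm m (a z ρ)])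
      _ ≤ (ρ/s)^d * (A * ρ ^ α) + 1 * (A * ρ ^ α) := by
          rw [one_mul]; exact add_le_add h3 h4
      _ ≤ (ρ/s)^d * (A * ρ ^ α) + (ρ/s)^d * (A * ρ ^ α) := by
          apply add_le_add_right
          exact mul_le_mul_of_nonneg_right hratio (by positivity)
      _ = 2 * (ρ/s)^d * (A * ρ ^ α) := by ring
  -- single dyadic step
  have hstep : ∀ (z : E) (ρ : ℝ), 0 < ρ →
      |a z (ρ/2) - a z ρ| ≤ 2^(d+1) * (A * ρ ^ α) := by
    intro z ρ hρ
    have := hcomp z z (ρ/2) ρ (by positivity) (by linarith) (ball_subset_ball (by linarith))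
    have hq : (ρ/(ρ/2)) = 2 := by field_simp
    rw [hq] at this
    calc |a z (ρ/2) - a z ρ| ≤ 2 * 2^d * (A * ρ ^ α) := this
      _ = 2^(d+1) * (A * ρ ^ α) := by ring
  -- rpow scaling
  have hrn : ∀ (ρ : ℝ) (n : ℕ), 0 < ρ → (ρ / 2^n) ^ α = ρ ^ α * r ^ n := by
    intro ρ n hρ
    have h1 : ρ / 2^n = ρ * ((1:ℝ)/2)^n := by
      rw [div_pow, one_pow]; ring
    rw [h1, Real.mul_rpow hρ.le (by positivity)]
    congr 1
    rw [← Real.rpow_natCast ((1:ℝ)/2) n, ← Real.rpow_mul (by norm_num),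
      mul_comm, Real.rpow_mul (by norm_num), Real.rpow_natCast]
  -- geometric sum bound
  have hgeom : ∀ n : ℕ, (∑ i ∈ Finset.range n, r ^ i) ≤ G := by
    intro n
    have h1 : (1 - r) * ∑ i ∈ Finset.range n, r ^ i = 1 - r ^ n := by
      have := geom_sum_mul r n
      have h2 : (r - 1) * ∑ i ∈ Finset.range n, r ^ i = r ^ n - 1 := by
        rw [mul_comm]; exact this
      nlinarith [h2]
    have hrn0 : 0 ≤ r ^ n := by positivity
    have h1p : (0:ℝ) < 1 - r := by linarith
    rw [hG_def, inv_eq_one_div, le_div_iff₀ h1p]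
    nlinarith
  -- dyadic chain
  have hchain : ∀ (z : E) (ρ : ℝ), 0 < ρ → ∀ n : ℕ,
      |a z (ρ/2^n) - a z ρ| ≤ 2^(d+1) * G * (A * ρ ^ α) := by
    intro z ρ hρ n
    have key : ∀ n : ℕ, |a z (ρ/2^n) - a z ρ| ≤
        2^(d+1) * (∑ i ∈ Finset.range n, r ^ i) * (A * ρ ^ α) := by
      intro n
      induction n with
      | zero => simp
      | succ n ih =>
        have hρn : 0 < ρ / 2^n := by positivity
        have hstep' := hstep z (ρ/2^n) hρn
        have heq : (ρ/2^n)/2 = ρ/2^(n+1) := by rw [pow_succ]; ring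
        rw [heq, hrn ρ n hρ] at hstep'
        calc |a z (ρ/2^(n+1)) - a z ρ|
            ≤ |a z (ρ/2^(n+1)) - a z (ρ/2^n)| + |a z (ρ/2^n) - a z ρ| := abs_sub_le _ _ _
          _ ≤ 2^(d+1) * (A * (ρ ^ α * r ^ n)) +
              2^(d+1) * (∑ i ∈ Finset.range n, r ^ i) * (A * ρ ^ α) := add_le_add hstep' ih
          _ = 2^(d+1) * (∑ i ∈ Finset.range (n+1), r ^ i) * (A * ρ ^ α) := by
              rw [Finset.sum_range_succ]; ring
    calc |a z (ρ/2^n) - a z ρ|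
        ≤ 2^(d+1) * (∑ i ∈ Finset.range n, r ^ i) * (A * ρ ^ α) := key n
      _ ≤ 2^(d+1) * G * (A * ρ ^ α) := by
          apply mul_le_mul_of_nonneg_right _ (by positivity)
          exact mul_le_mul_of_nonneg_left (hgeom n) (by positivity)
  -- full scale comparison
  have hscale : ∀ (z : E) (s ρ : ℝ), 0 < s → s ≤ ρ →
      |a z s - a z ρ| ≤ D2 * (A * ρ ^ α) := by
    intro z s ρ hs hsρ
    have hρ : 0 < ρ := lt_of_lt_of_le hs hsρ
    have hex : ∃ n : ℕ, ρ / 2^(n+1) < s := by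
      obtain ⟨n, hn⟩ := pow_unbounded_of_one_lt (ρ/s) (one_lt_two (α := ℝ))
      refine ⟨n, ?_⟩
      rw [div_lt_iff₀ hs] at hn
      rw [div_lt_iff₀ (by positivity), pow_succ]
      nlinarith [pow_pos (zero_lt_two (α := ℝ)) n]
    set n := Nat.find hex with hn_def
    have hlt : ρ / 2^(n+1) < s := Nat.find_spec hex
    have hge : s ≤ ρ / 2^n := by
      rcases Nat.eq_zero_or_pos n with h0 | h0
      · rw [h0]; simpa using hsρ
      · have := Nat.find_min hex (m := n - 1) (by omega)
        push_neg at this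
        have heq : n - 1 + 1 = n := by omega
        rwa [heq] at this
    have hρn : 0 < ρ / 2^n := by positivity
    have hsub : ball z s ⊆ ball z (ρ / 2^n) := ball_subset_ball hge
    have h1 := hcomp z z s (ρ/2^n) hs hge hsub
    have hratio2 : (ρ/2^n)/s ≤ 2 := by
      rw [div_div, div_le_iff₀ (by positivity : (0:ℝ) < 2^n * s)]
      rw [div_lt_iff₀ (by positivity), pow_succ] at hlt
      nlinarith
    have hratio0 : 0 ≤ (ρ/2^n)/s := by positivity
    have h2 : ((ρ/2^n)/s)^d ≤ 2^d := pow_le_pow_left₀ hratio0 hratio2 d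
    have h3 : (ρ/2^n) ^ α ≤ ρ ^ α := by
      apply Real.rpow_le_rpow hρn.le _ hα.le
      calc ρ / 2^n ≤ ρ / 1 := by
            apply div_le_div_of_nonneg_left hρ.le one_pos
            exact one_le_pow₀ one_le_two
        _ = ρ := div_one ρ
    have h4 : |a z s - a z (ρ/2^n)| ≤ 2^(d+1) * (A * ρ ^ α) := by
      calc |a z s - a z (ρ/2^n)| ≤ 2 * ((ρ/2^n)/s)^d * (A * (ρ/2^n) ^ α) := h1
        _ ≤ 2 * 2^d * (A * ρ ^ α) := by
            apply mul_le_mul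
            · exact mul_le_mul_of_nonneg_left h2 (by norm_num)
            · exact mul_le_mul_of_nonneg_left h3 hA
            · positivity
            · positivity
        _ = 2^(d+1) * (A * ρ ^ α) := by ring
    have h5 := hchain z ρ hρ n
    calc |a z s - a z ρ| ≤ |a z s - a z (ρ/2^n)| + |a z (ρ/2^n) - a z ρ| := abs_sub_le _ _ _
      _ ≤ 2^(d+1) * (A * ρ ^ α) + 2^(d+1) * G * (A * ρ ^ α) := add_le_add h4 h5
      _ = D2 * (A * ρ ^ α) := by rw [hD2_def]; ring
  -- the sequence of averages at dyadic scales converges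
  set u : E → ℕ → ℝ := fun x n => a x (((1:ℝ)/2)^n) with hu_def
  have hcauchy : ∀ x : E, CauchySeq (u x) := by
    intro x
    apply cauchySeq_of_le_geometric r (2^(d+1) * A) hr1
    intro n
    have hρn : (0:ℝ) < ((1:ℝ)/2)^n := by positivity
    have h1 := hstep x (((1:ℝ)/2)^n) hρn
    have heq : ((1:ℝ)/2)^n / 2 = ((1:ℝ)/2)^(n+1) := by
      rw [pow_succ]; ring
    rw [heq] at h1
    have h2 : (((1:ℝ)/2)^n) ^ α = r ^ n := by
      rw [← Real.rpow_natCast ((1:ℝ)/2) n, ← Real.rpow_mul (by norm_num),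
        mul_comm, Real.rpow_mul (by norm_num), Real.rpow_natCast]
    rw [h2] at h1
    rw [Real.dist_eq, abs_sub_comm]
    calc |u x (n+1) - u x n| ≤ 2^(d+1) * (A * r ^ n) := h1
      _ = 2^(d+1) * A * r ^ n := by ring
  have hex : ∀ x : E, ∃ L : ℝ, Tendsto (u x) atTop (𝓝 L) :=
    fun x => cauchySeq_tendsto_of_complete (hcauchy x)
  choose b' hb' using hex
  -- key estimate: |b' x - a x ρ| ≤ D2 * A * ρ^α
  have hQ : ∀ (x : E) (ρ : ℝ), 0 < ρ → |b' x - a x ρ| ≤ D2 * (A * ρ ^ α) := by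
    intro x ρ hρ
    have htd : Tendsto (fun n => |u x n - a x ρ|) atTop (𝓝 |b' x - a x ρ|) :=
      ((hb' x).sub tendsto_const_nhds).abs
    apply le_of_tendsto htd
    have hev : ∀ᶠ n : ℕ in atTop, ((1:ℝ)/2)^n ≤ ρ := by
      have ht0 : Tendsto (fun n : ℕ => ((1:ℝ)/2)^n) atTop (𝓝 0) :=
        tendsto_pow_atTop_nhds_zero_of_lt_one (by norm_num) (by norm_num)
      exact ht0.eventually_le_const hρ
    filter_upwards [hev] with n hn
    exact hscale x (((1:ℝ)/2)^n) ρ (by positivity) hn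
  refine ⟨b', ?_, ?_⟩
  · -- a.e. equality via Lebesgue differentiation
    have hae := (Besicovitch.vitaliFamily (volume : Measure E)).ae_tendsto_average hbl
    have hseq : Tendsto (fun n : ℕ => ((1:ℝ)/2)^n) atTop (𝓝[>] (0:ℝ)) := by
      apply tendsto_nhdsWithin_of_tendsto_nhds_of_eventually_within
      · exact tendsto_pow_atTop_nhds_zero_of_lt_one (by norm_num) (by norm_num)
      · exact Eventually.of_forall (fun n => Set.mem_Ioi.mpr (by positivity))
    have hcb : ∀ (x : E) (s : ℝ), 0 < s →
        (⨍ y in closedBall x s, b y) = ⨍ y in ball x s, b y := by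
      intro x s hs
      have hae_eq : closedBall x s =ᵐ[volume] ball x s := by
        rw [MeasureTheory.ae_eq_set]
        constructor
        · rw [closedBall_diff_ball]
          exact Measure.addHaar_sphere_of_ne_zero volume x hs.ne'
        · rw [Set.diff_eq_empty.mpr ball_subset_closedBall]
          exact measure_empty
      unfold MeasureTheory.average
      rw [Measure.restrict_congr_set hae_eq]
    filter_upwards [hae] with x hx
    have h1 : Tendsto (fun n : ℕ => ⨍ y in closedBall x (((1:ℝ)/2)^n), b y) atTop (𝓝 (b x)) :=
      hx.comp ((Besicovitch.tendsto_filterAt volume x).comp hseq)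
    have h2 : Tendsto (fun n : ℕ => u x n) atTop (𝓝 (b x)) := by
      apply h1.congr
      intro n
      exact hcb x (((1:ℝ)/2)^n) (by positivity)
    exact tendsto_nhds_unique h2 (hb' x)
  · -- Hölder estimate
    intro x y
    rcases eq_or_ne x y with rfl | hxy
    · rw [dist_self, Real.zero_rpow hα.ne']
      simp
    · set ρ : ℝ := dist x y with hρ_def
      have hρ : 0 < ρ := dist_pos.mpr hxy
      have h1 := hQ x ρ hρ
      have h2 := hQ y ρ hρ
      have hsubx : ball x ρ ⊆ ball x (2*ρ) := ball_subset_ball (by linarith)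
      have hsuby : ball y ρ ⊆ ball x (2*ρ) := by
        intro w hw
        rw [mem_ball] at hw ⊢
        calc dist w x ≤ dist w y + dist y x := dist_triangle _ _ _
          _ < ρ + ρ := by rw [dist_comm y x]; exact add_lt_add_left hw ρ
          _ = 2 * ρ := by ring
      have h3 := hcomp x x ρ (2*ρ) hρ (by linarith) hsubx
      have h4 := hcomp y x ρ (2*ρ) hρ (by linarith) hsuby
      have hq2 : (2*ρ/ρ) = 2 := by field_simp
      rw [hq2] at h3 h4
      have h2ρα : (2*ρ) ^ α = 2^α * ρ ^ α := Real.mul_rpow (by norm_num) hρ.le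
      rw [h2ρα] at h3 h4
      have hmid : |a x ρ - a y ρ| ≤ 2^(d+2) * (2:ℝ)^α * (A * ρ ^ α) := by
        calc |a x ρ - a y ρ| ≤ |a x ρ - a x (2*ρ)| + |a y ρ - a x (2*ρ)| := by
              rw [abs_sub_comm (a y ρ) (a x (2*ρ))] at *
              exact (abs_sub_le _ _ _).trans (by rw [abs_sub_comm (a x (2*ρ)) (a y ρ)])
          _ ≤ 2 * 2^d * (A * (2^α * ρ ^ α)) + 2 * 2^d * (A * (2^α * ρ ^ α)) := add_le_add h3 h4
          _ = 2^(d+2) * (2:ℝ)^α * (A * ρ ^ α) := by ring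
      calc |b' x - b' y|
          ≤ |b' x - a x ρ| + |a x ρ - b' y| := abs_sub_le _ _ _
        _ ≤ |b' x - a x ρ| + (|a x ρ - a y ρ| + |a y ρ - b' y|) :=
            add_le_add_right (abs_sub_le _ _ _) _
        _ ≤ D2 * (A * ρ ^ α) + (2^(d+2) * (2:ℝ)^α * (A * ρ ^ α) + D2 * (A * ρ ^ α)) := by
            apply add_le_add h1
            apply add_le_add hmid
            rw [abs_sub_comm]
            exact h2
        _ = (2 * D2 + 2^(d+2) * (2:ℝ)^α) * A * ρ ^ α := by ring


lemma jensen_pow (k : ℕ) {X : Type*} [MeasurableSpace X] (μ : Measure X)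
    (hμ0 : μ Set.univ ≠ 0) (hμt : μ Set.univ ≠ ⊤) (f : X → ℝ) (hf0 : ∀ x, 0 ≤ f x)
    (hfi : Integrable f μ) (hfk : Integrable (fun x => f x ^ k) μ) :
    (⨍ x, f x ∂μ) ^ k ≤ ⨍ x, f x ^ k ∂μ := by
  haveI : IsFiniteMeasure μ := ⟨lt_top_iff_ne_top.mpr hμt⟩
  haveI : NeZero μ := ⟨by
    intro h
    rw [h] at hμ0
    simp at hμ0⟩
  have := (convexOn_pow (𝕜 := ℝ) k).map_average_le (continuousOn_pow k) isClosed_Ici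
    (Eventually.of_forall (fun x => hf0 x)) hfi hfk
  exact this

lemma const_of_superholder {E : Type*} [NormedAddCommGroup E] [NormedSpace ℝ E]
    (α C : ℝ) (hα : 1 < α) (f : E → ℝ)
    (h : ∀ x y : E, |f x - f y| ≤ C * dist x y ^ α) :
    ∀ x y : E, f x = f y := by
  intro x y
  rcases eq_or_ne x y with rfl | hxy
  · rfl
  have hC : 0 ≤ C := by
    have := h x y
    have hd : 0 < dist x y := dist_pos.mpr hxy
    nlinarith [abs_nonneg (f x - f y), Real.rpow_pos_of_pos hd α]
  set D : ℝ := dist x y with hD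
  have hD0 : 0 < D := dist_pos.mpr hxy
  -- subdivision bound
  have hbound : ∀ n : ℕ, 1 ≤ n → |f x - f y| ≤ C * D ^ α * ((n:ℝ) / (n:ℝ) ^ α) := by
    intro n hn
    have hn0 : (0:ℝ) < n := by exact_mod_cast hn
    set P : ℕ → E := fun i => x + ((i:ℝ)/n) • (y - x) with hP
    have hP0 : P 0 = x := by simp [hP]
    have hPn : P n = y := by
      simp only [hP]
      rw [div_self hn0.ne', one_smul]
      abel
    have hPd : ∀ i : ℕ, dist (P (i+1)) (P i) = D / n := by
      intro i
      rw [dist_eq_norm]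
      have : P (i+1) - P i = ((1:ℝ)/n) • (y - x) := by
        simp only [hP]
        rw [add_sub_add_left_eq_sub, ← sub_smul]
        congr 1
        push_cast
        field_simp
        ring
      rw [this, norm_smul, Real.norm_eq_abs, abs_of_nonneg (by positivity)]
      rw [hD, dist_eq_norm, norm_sub_rev]
      ring
    have htel : f y - f x = ∑ i ∈ Finset.range n, (f (P (i+1)) - f (P i)) := by
      rw [Finset.sum_range_sub (fun i => f (P i)) n, hP0, hPn]
    have habs : |f x - f y| ≤ ∑ i ∈ Finset.range n, |f (P (i+1)) - f (P i)| := by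
      rw [abs_sub_comm, htel]
      exact Finset.abs_sum_le_sum_abs _ _
    have hterm : ∀ i ∈ Finset.range n, |f (P (i+1)) - f (P i)| ≤ C * (D/n) ^ α := by
      intro i _
      have := h (P (i+1)) (P i)
      rwa [hPd i] at this
    calc |f x - f y| ≤ ∑ i ∈ Finset.range n, |f (P (i+1)) - f (P i)| := habs
      _ ≤ ∑ _i ∈ Finset.range n, C * (D/n) ^ α := Finset.sum_le_sum hterm
      _ = n * (C * (D/n) ^ α) := by rw [Finset.sum_const, Finset.card_range, nsmul_eq_mul]
      _ = C * D ^ α * ((n:ℝ) / (n:ℝ) ^ α) := by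
          rw [Real.div_rpow hD0.le hn0.le]
          field_simp
  -- the bound tends to zero
  have htend : Tendsto (fun n : ℕ => C * D ^ α * ((n:ℝ) / (n:ℝ) ^ α)) atTop (𝓝 0) := by
    have h1 : Tendsto (fun t : ℝ => t ^ (-(α - 1))) atTop (𝓝 0) :=
      tendsto_rpow_neg_atTop (by linarith : (0:ℝ) < α - 1)
    have h2 : Tendsto (fun n : ℕ => ((n:ℝ)) ^ (-(α - 1))) atTop (𝓝 0) :=
      h1.comp tendsto_natCast_atTop_atTop
    have h3 : ∀ᶠ n : ℕ in atTop, ((n:ℝ)) ^ (-(α - 1)) = (n:ℝ) / (n:ℝ) ^ α := by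
      filter_upwards [eventually_ge_atTop 1] with n hn
      have hn0 : (0:ℝ) < n := by exact_mod_cast hn
      rw [Real.rpow_neg hn0.le, Real.rpow_sub hn0, Real.rpow_one, inv_div]
    have h4 : Tendsto (fun n : ℕ => (n:ℝ) / (n:ℝ) ^ α) atTop (𝓝 0) := h2.congr' h3
    have h5 := h4.const_mul (C * D ^ α)
    rw [mul_zero] at h5
    exact h5
  have hle : |f x - f y| ≤ 0 := by
    apply ge_of_tendsto htend
    filter_upwards [eventually_ge_atTop 1] with n hn
    exact hbound n hn
  have := abs_nonneg (f x - f y)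
  have : |f x - f y| = 0 := le_antisymm hle this
  linarith [abs_eq_zero.mp this, sub_eq_zero.mp (abs_eq_zero.mp this)]


/-- Necessary conditions for the weak off-support `L^p → L^q` bound of the
iterated commutator `T_b^k`, `p ≤ q`, with `α := (d/k)(1/p − 1/q)`. -/
theorem statement17
    (d : ℕ) (hd : 1 ≤ d) (k : ℕ) (hk : 1 ≤ k)
    (K : EuclideanSpace ℝ (Fin d) → EuclideanSpace ℝ (Fin d) → ℂ)
    (hKmeas : Measurable fun z : EuclideanSpace ℝ (Fin d) × EuclideanSpace ℝ (Fin d) => K z.1 z.2)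
    (c1 C1 : ℝ) (hc1 : 0 < c1) (hC1 : 3 ≤ C1)
    (hpos : UnifQuantPositivityBalls d K c1 C1)
    (p q : ℝ) (hp : 1 < p) (hpq : p ≤ q) :
    ∃ C : ℝ, 0 < C ∧
      ∀ (b : EuclideanSpace ℝ (Fin d) → ℝ) (Θ : ℝ),
        Measurable b → LocallyIntegrable (fun x => |b x| ^ k) volume → 0 ≤ Θ →
        -- off-support absolute integrability
        (∀ (y0 x0 : EuclideanSpace ℝ (Fin d)) (r : ℝ), 0 < r → 3 * r ≤ dist y0 x0 →
          IntegrableOn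
            (fun z : EuclideanSpace ℝ (Fin d) × EuclideanSpace ℝ (Fin d) =>
              |b z.1 - b z.2| ^ k * ‖K z.1 z.2‖)
            ((ball x0 r) ×ˢ (ball y0 r)) volume) →
        -- weak form of the L^p → L^q bound for T_b^k
        (∀ (y0 x0 : EuclideanSpace ℝ (Fin d)) (r : ℝ), 0 < r → 3 * r ≤ dist y0 x0 →
          ∀ (f g : EuclideanSpace ℝ (Fin d) → ℂ) (Mf Mg : ℝ),
            Measurable f → Measurable g →
            (∀ x ∉ ball y0 r, f x = 0) → (∀ x ∉ ball x0 r, g x = 0) →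
            (∀ x, ‖f x‖ ≤ Mf) → (∀ x, ‖g x‖ ≤ Mg) →
            ‖∫ x in ball x0 r, ∫ y in ball y0 r,
                (((b x - b y) ^ k : ℝ) : ℂ) * K x y * f y * g x‖
              ≤ Θ * (Mf * (volume (ball y0 r)).toReal ^ (1 / p))
                  * (Mg * (volume (ball x0 r)).toReal ^ (1 - 1 / q))) →
        -- conclusions, with α := (d/k)(1/p − 1/q)
        ((((d : ℝ) / k) * (1 / p - 1 / q) = 0 →
            ∀ (z : EuclideanSpace ℝ (Fin d)) (ρ : ℝ), 0 < ρ →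
              (⨍ x in ball z ρ, |b x - ⨍ y in ball z ρ, b y|) ^ k ≤ C * Θ) ∧
          (0 < ((d : ℝ) / k) * (1 / p - 1 / q) → ((d : ℝ) / k) * (1 / p - 1 / q) ≤ 1 →
            ∃ b' : EuclideanSpace ℝ (Fin d) → ℝ,
              (∀ᵐ x ∂(volume : Measure (EuclideanSpace ℝ (Fin d))), b x = b' x) ∧
              ∀ x y, |b' x - b' y| ^ k
                ≤ C * Θ * dist x y ^ ((((d : ℝ) / k) * (1 / p - 1 / q)) * k)) ∧
          (1 < ((d : ℝ) / k) * (1 / p - 1 / q) →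
            ∃ c0 : ℝ, ∀ᵐ x ∂(volume : Measure (EuclideanSpace ℝ (Fin d))), b x = c0)) := by

  classical
  have hq1 : 1 < q := lt_of_lt_of_le hp hpq
  have hp0 : 0 < p := lt_trans one_pos hp
  have hq0 : 0 < q := lt_trans one_pos hq1
  have hkR : (0:ℝ) < (k:ℝ) := by exact_mod_cast hk
  have hk0 : k ≠ 0 := by omega
  set β : ℝ := 1/p - 1/q with hβ_def
  have hβ0 : 0 ≤ β := by
    have : 1/q ≤ 1/p := one_div_le_one_div_of_le hp0 hpq
    rw [hβ_def]; linarith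
  set αr : ℝ := ((d:ℝ)/k) * β with hαr_def
  set v : ℝ := (volume (ball (0 : EuclideanSpace ℝ (Fin d)) 1)).toReal with hv_def
  have hv0 : 0 < v := ENNReal.toReal_pos (measure_ball_pos volume _ one_pos).ne'
    measure_ball_lt_top.ne
  have hvol : ∀ (x : EuclideanSpace ℝ (Fin d)) (ρ : ℝ), 0 < ρ →
      (volume (ball x ρ)).toReal = ρ ^ d * v := by
    intro x ρ hρ
    rw [Measure.addHaar_ball_of_pos volume x hρ]
    rw [ENNReal.toReal_mul, ENNReal.toReal_ofReal (by positivity)]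
    congr 2
    exact finrank_euclideanSpace_fin
  set c2 : ℝ := 4 / c1 with hc2_def
  have hc2 : 0 < c2 := by positivity
  set CC : ℝ := if h : 0 < αr then (campanato d αr h).choose else 1 with hCC_def
  have hCC0 : 0 < CC := by
    rw [hCC_def]
    split_ifs with h
    · exact (campanato d αr h).choose_spec.1
    · norm_num
  refine ⟨max (2^k * c2) (CC^k * c2 * v ^ β), lt_max_iff.mpr (Or.inl (by positivity)), ?_⟩
  intro b Θ hb hbk hΘ habs hweak
  -- integrability helpers
  have hpow2 : ∀ t c : ℝ, |t - c| ^ k ≤ 2^k * (|t|^k + |c|^k) := by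
    intro t c
    have h1 : |t - c| ≤ |t| + |c| := by
      calc |t - c| = |t + (-c)| := by rw [sub_eq_add_neg]
        _ ≤ |t| + |-c| := abs_add_le _ _
        _ = |t| + |c| := by rw [abs_neg]
    have h2 : |t| + |c| ≤ 2 * max |t| |c| := by
      rcases le_total |t| |c| with h | h
      · rw [max_eq_right h]; linarith
      · rw [max_eq_left h]; linarith
    have h3 : (max |t| |c|) ^ k ≤ |t|^k + |c|^k := by
      rcases le_total |t| |c| with h | h
      · rw [max_eq_right h]
        exact le_add_of_nonneg_left (by positivity)
      · rw [max_eq_left h]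
        exact le_add_of_nonneg_right (by positivity)
    calc |t - c| ^ k ≤ (2 * max |t| |c|) ^ k :=
          pow_le_pow_left₀ (abs_nonneg _) (le_trans h1 h2) k
      _ = 2^k * (max |t| |c|) ^ k := mul_pow 2 _ k
      _ ≤ 2^k * (|t|^k + |c|^k) := by
          exact mul_le_mul_of_nonneg_left h3 (by positivity)
  have habs1 : ∀ t : ℝ, |t| ≤ 1 + |t| ^ k := by
    intro t
    rcases le_total |t| 1 with h | h
    · have : (0:ℝ) ≤ |t| ^ k := by positivity
      linarith
    · have h2 : |t| ≤ |t| ^ k := by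
        calc |t| = |t| ^ 1 := (pow_one _).symm
          _ ≤ |t| ^ k := pow_le_pow_right₀ h hk
      linarith
  have hIbk : ∀ (z : EuclideanSpace ℝ (Fin d)) (ρ : ℝ),
      IntegrableOn (fun x => |b x| ^ k) (ball z ρ) volume := fun z ρ =>
    (hbk.integrableOn_isCompact (isCompact_closedBall z ρ)).mono_set ball_subset_closedBall
  have hIntc : ∀ (c : ℝ) (z : EuclideanSpace ℝ (Fin d)) (ρ : ℝ),
      IntegrableOn (fun x => |b x - c| ^ k) (ball z ρ) volume := by
    intro c z ρ
    apply Integrable.mono' (((hIbk z ρ).add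
      (integrableOn_const (C := |c|^k) measure_ball_lt_top.ne)).const_mul (2^k))
    · exact (((hb.sub measurable_const).abs.pow_const k)).aestronglyMeasurable.restrict
    · refine Eventually.of_forall (fun x => ?_)
      rw [Real.norm_eq_abs, abs_of_nonneg (by positivity)]
      exact hpow2 (b x) c
  have hIbc1 : ∀ (c : ℝ) (z : EuclideanSpace ℝ (Fin d)) (ρ : ℝ),
      IntegrableOn (fun x => |b x - c|) (ball z ρ) volume := by
    intro c z ρ
    apply Integrable.mono' ((integrableOn_const (C := (1:ℝ)) measure_ball_lt_top.ne).add (hIntc c z ρ))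
    · exact ((hb.sub measurable_const).abs).aestronglyMeasurable.restrict
    · refine Eventually.of_forall (fun x => ?_)
      rw [Real.norm_eq_abs, abs_abs]
      exact habs1 (b x - c)
  have hIb : ∀ (z : EuclideanSpace ℝ (Fin d)) (ρ : ℝ),
      IntegrableOn b (ball z ρ) volume := by
    intro z ρ
    apply Integrable.mono' ((integrableOn_const (C := (1:ℝ)) measure_ball_lt_top.ne).add (hIbk z ρ))
    · exact hb.aestronglyMeasurable.restrict
    · refine Eventually.of_forall (fun x => ?_)
      rw [Real.norm_eq_abs]
      exact habs1 (b x)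
  have hbl : LocallyIntegrable b volume := fun x =>
    ⟨ball x 1, ball_mem_nhds x one_pos, hIb x 1⟩
  -- mean bound
  have hmean : ∀ (z : EuclideanSpace ℝ (Fin d)) (ρ c : ℝ), 0 < ρ →
      |(⨍ x in ball z ρ, b x) - c| ≤ ⨍ x in ball z ρ, |b x - c| := by
    intro z ρ c hρ
    have hV0 : (volume (ball z ρ)).toReal ≠ 0 := by
      rw [hvol z ρ hρ]; positivity
    have h1 : (⨍ x in ball z ρ, b x) - c =
        ((volume (ball z ρ)).toReal)⁻¹ * ∫ x in ball z ρ, (b x - c) := by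
      rw [setAverage_eq, integral_sub (hIb z ρ) (integrableOn_const measure_ball_lt_top.ne), setIntegral_const, smul_eq_mul, smul_eq_mul, measureReal_def]
      field_simp
    rw [h1, setAverage_eq, smul_eq_mul]
    rw [abs_mul, abs_inv, abs_of_nonneg ENNReal.toReal_nonneg]
    apply mul_le_mul_of_nonneg_left _ (by positivity)
    simpa [Real.norm_eq_abs] using
      norm_integral_le_integral_norm (μ := volume.restrict (ball z ρ)) (fun x => b x - c)
  -- oscillation bounds
  set M : ℝ := c2 * Θ * v ^ β with hM_def
  have hM0 : 0 ≤ M := by positivity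
  have hosck : ∀ (z : EuclideanSpace ℝ (Fin d)) (ρ : ℝ), 0 < ρ →
      ∃ m : ℝ, ⨍ x in ball z ρ, |b x - m| ^ k ≤ M * ρ ^ (αr * (k:ℝ)) := by
    intro z ρ hρ
    obtain ⟨m, hm⟩ := osc_bound d k hk K hKmeas c1 C1 hc1 hpos p q b Θ hb
      (fun c z ρ => hIntc c z ρ) habs hweak z ρ hρ
    refine ⟨m, ?_⟩
    set Vt : ℝ := (volume (ball z ρ)).toReal with hVt_def
    have hVtv : Vt = ρ ^ d * v := hvol z ρ hρ
    have hVtpos : 0 < Vt := by rw [hVtv]; positivity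
    have havg : (⨍ x in ball z ρ, |b x - m| ^ k) = Vt⁻¹ * ∫ x in ball z ρ, |b x - m| ^ k := by
      rw [setAverage_eq, smul_eq_mul, measureReal_def]
    rw [havg]
    have step1 : Vt⁻¹ * ∫ x in ball z ρ, |b x - m| ^ k ≤
        Vt⁻¹ * (c2 * Θ * (Vt ^ ((1:ℝ)/p) * Vt ^ (1 - 1/q))) := by
      apply mul_le_mul_of_nonneg_left _ (by positivity)
      calc (∫ x in ball z ρ, |b x - m| ^ k)
          ≤ 4 / c1 * Θ * (Vt ^ ((1:ℝ)/p) * Vt ^ (1 - 1/q)) := hm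
        _ = c2 * Θ * (Vt ^ ((1:ℝ)/p) * Vt ^ (1 - 1/q)) := by rw [hc2_def]
    refine le_trans step1 ?_
    have e1 : Vt⁻¹ * (Vt ^ ((1:ℝ)/p) * Vt ^ (1 - 1/q)) = Vt ^ β := by
      have h2 : Vt ^ ((-1:ℝ) + ((1:ℝ)/p + (1 - 1/q))) =
          Vt ^ (-1:ℝ) * (Vt ^ ((1:ℝ)/p) * Vt ^ (1 - 1/q)) := by
        rw [Real.rpow_add hVtpos, Real.rpow_add hVtpos]
      rw [Real.rpow_neg_one] at h2
      rw [← h2]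
      congr 1
      rw [hβ_def]; ring
    have e2 : Vt ^ β = v ^ β * ρ ^ (αr * (k:ℝ)) := by
      rw [hVtv, Real.mul_rpow (by positivity) hv0.le]
      rw [← Real.rpow_natCast ρ d, ← Real.rpow_mul hρ.le]
      rw [mul_comm (v ^ β)]
      congr 1
      rw [hαr_def]
      field_simp
    calc Vt⁻¹ * (c2 * Θ * (Vt ^ ((1:ℝ)/p) * Vt ^ (1 - 1/q)))
        = c2 * Θ * (Vt⁻¹ * (Vt ^ ((1:ℝ)/p) * Vt ^ (1 - 1/q))) := by ring
      _ = c2 * Θ * (v ^ β * ρ ^ (αr * (k:ℝ))) := by rw [e1, e2]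
      _ = M * ρ ^ (αr * (k:ℝ)) := by rw [hM_def]; ring
      _ ≤ M * ρ ^ (αr * (k:ℝ)) := le_rfl
  -- L¹ oscillation bound via Jensen
  set A : ℝ := M ^ ((1:ℝ)/k) with hA_def
  have hA0 : 0 ≤ A := Real.rpow_nonneg hM0 _
  have hAk : A ^ k = M := by
    rw [hA_def, ← Real.rpow_natCast (M ^ ((1:ℝ)/k)) k, ← Real.rpow_mul hM0]
    rw [one_div, inv_mul_cancel₀ (by positivity : (k:ℝ) ≠ 0), Real.rpow_one]
  have hjensen : ∀ (z : EuclideanSpace ℝ (Fin d)) (ρ : ℝ) (m : ℝ), 0 < ρ →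
      (⨍ x in ball z ρ, |b x - m|) ^ k ≤ ⨍ x in ball z ρ, |b x - m| ^ k := by
    intro z ρ m hρ
    apply jensen_pow k (volume.restrict (ball z ρ))
    · rw [Measure.restrict_apply_univ]
      exact (measure_ball_pos volume z hρ).ne'
    · rw [Measure.restrict_apply_univ]
      exact measure_ball_lt_top.ne
    · exact fun x => abs_nonneg _
    · exact hIbc1 m z ρ
    · exact hIntc m z ρ
  have havg_nonneg : ∀ (z : EuclideanSpace ℝ (Fin d)) (ρ : ℝ) (m : ℝ),
      0 ≤ ⨍ x in ball z ρ, |b x - m| := by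
    intro z ρ m
    rw [setAverage_eq, smul_eq_mul]
    apply mul_nonneg (by positivity)
    exact setIntegral_nonneg measurableSet_ball (fun x _ => abs_nonneg _)
  have hosc1 : ∀ (z : EuclideanSpace ℝ (Fin d)) (ρ : ℝ), 0 < ρ →
      ∃ m : ℝ, ⨍ x in ball z ρ, |b x - m| ≤ A * ρ ^ αr := by
    intro z ρ hρ
    obtain ⟨m, hm⟩ := hosck z ρ hρ
    refine ⟨m, ?_⟩
    have hch : (⨍ x in ball z ρ, |b x - m|) ^ k ≤ (A * ρ ^ αr) ^ k := by
      calc (⨍ x in ball z ρ, |b x - m|) ^ k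
          ≤ ⨍ x in ball z ρ, |b x - m| ^ k := hjensen z ρ m hρ
        _ ≤ M * ρ ^ (αr * (k:ℝ)) := hm
        _ = (A * ρ ^ αr) ^ k := by
            rw [mul_pow, hAk]
            congr 1
            rw [← Real.rpow_natCast (ρ ^ αr) k, ← Real.rpow_mul hρ.le]
    exact (pow_le_pow_iff_left₀ (havg_nonneg z ρ m) (by positivity) hk0).mp hch
  refine ⟨?_, ?_, ?_⟩
  · -- branch 1 : α = 0
    intro hα0 z ρ hρ
    have hβz : β = 0 := by
      have hdk : ((d:ℝ)/k) ≠ 0 := by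
        apply div_ne_zero _ (by positivity)
        exact_mod_cast (by omega : d ≠ 0)
      rcases mul_eq_zero.mp hα0 with h | h
      · exact absurd h hdk
      · exact h
    obtain ⟨m, hm⟩ := hosck z ρ hρ
    have hrw : M * ρ ^ (αr * (k:ℝ)) = c2 * Θ := by
      rw [hM_def, hαr_def, hβz]
      rw [mul_zero, zero_mul, Real.rpow_zero, Real.rpow_zero]
      ring
    rw [hrw] at hm
    set g : ℝ := ⨍ y in ball z ρ, b y with hg_def
    have h1 : (⨍ x in ball z ρ, |b x - g|) ≤ 2 * ⨍ x in ball z ρ, |b x - m| := by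
      set Vt : ℝ := (volume (ball z ρ)).toReal with hVt_def
      have hVtpos : 0 < Vt := by rw [hVt_def, hvol z ρ hρ]; positivity
      have hptw : ∀ x, |b x - g| ≤ |b x - m| + |m - g| := by
        intro x
        calc |b x - g| = |(b x - m) + (m - g)| := by ring_nf
          _ ≤ |b x - m| + |m - g| := abs_add_le _ _
      have hint : (∫ x in ball z ρ, |b x - g|) ≤
          (∫ x in ball z ρ, |b x - m|) + Vt * |m - g| := by
        calc (∫ x in ball z ρ, |b x - g|)
            ≤ ∫ x in ball z ρ, (|b x - m| + |m - g|) := by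
              apply integral_mono (hIbc1 g z ρ)
                ((hIbc1 m z ρ).add (integrableOn_const measure_ball_lt_top.ne))
              exact hptw
          _ = (∫ x in ball z ρ, |b x - m|) + Vt * |m - g| := by
              rw [integral_add (hIbc1 m z ρ)
                (integrableOn_const measure_ball_lt_top.ne),
                setIntegral_const, smul_eq_mul, measureReal_def]
      have hmg : |m - g| ≤ ⨍ x in ball z ρ, |b x - m| := by
        rw [abs_sub_comm]
        exact hmean z ρ m hρ
      calc (⨍ x in ball z ρ, |b x - g|) = Vt⁻¹ * ∫ x in ball z ρ, |b x - g| := by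
            rw [setAverage_eq, smul_eq_mul, measureReal_def]
        _ ≤ Vt⁻¹ * ((∫ x in ball z ρ, |b x - m|) + Vt * |m - g|) :=
            mul_le_mul_of_nonneg_left hint (by positivity)
        _ = (⨍ x in ball z ρ, |b x - m|) + |m - g| := by
            rw [setAverage_eq, smul_eq_mul, measureReal_def, ← hVt_def]
            rw [mul_add, ← mul_assoc Vt⁻¹ Vt, inv_mul_cancel₀ hVtpos.ne', one_mul]
        _ ≤ (⨍ x in ball z ρ, |b x - m|) + ⨍ x in ball z ρ, |b x - m| :=
            add_le_add_right hmg _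
        _ = 2 * ⨍ x in ball z ρ, |b x - m| := by ring
    calc (⨍ x in ball z ρ, |b x - g|) ^ k
        ≤ (2 * ⨍ x in ball z ρ, |b x - m|) ^ k :=
          pow_le_pow_left₀ (havg_nonneg z ρ g) h1 k
      _ = 2^k * (⨍ x in ball z ρ, |b x - m|) ^ k := mul_pow 2 _ k
      _ ≤ 2^k * ⨍ x in ball z ρ, |b x - m| ^ k :=
          mul_le_mul_of_nonneg_left (hjensen z ρ m hρ) (by positivity)
      _ ≤ 2^k * (c2 * Θ) := mul_le_mul_of_nonneg_left hm (by positivity)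
      _ = (2^k * c2) * Θ := by ring
      _ ≤ (max (2^k * c2) (CC^k * c2 * v ^ β)) * Θ :=
          mul_le_mul_of_nonneg_right (le_max_left _ _) hΘ
  · -- branch 2 : 0 < α ≤ 1
    intro hαp _
    have hCCval : CC = (campanato d αr hαp).choose := by rw [hCC_def, dif_pos hαp]
    obtain ⟨hCp, hCspec⟩ := (campanato d αr hαp).choose_spec
    obtain ⟨b', hb'ae, hb'h⟩ := hCspec A hA0 b hbl (hosc1)
    refine ⟨b', hb'ae, ?_⟩
    intro x y
    have h1 : |b' x - b' y| ^ k ≤ ((campanato d αr hαp).choose * A * dist x y ^ αr) ^ k :=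
      pow_le_pow_left₀ (abs_nonneg _) (hb'h x y) k
    calc |b' x - b' y| ^ k
        ≤ ((campanato d αr hαp).choose * A * dist x y ^ αr) ^ k := h1
      _ = CC^k * (A^k) * (dist x y ^ αr) ^ k := by rw [hCCval]; ring
      _ = CC^k * M * dist x y ^ (αr * (k:ℝ)) := by
          rw [hAk, ← Real.rpow_natCast (dist x y ^ αr) k, ← Real.rpow_mul dist_nonneg]
      _ = (CC^k * c2 * v ^ β) * Θ * dist x y ^ (αr * (k:ℝ)) := by rw [hM_def]; ring
      _ ≤ (max (2^k * c2) (CC^k * c2 * v ^ β)) * Θ * dist x y ^ (αr * (k:ℝ)) := by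
          apply mul_le_mul_of_nonneg_right _ (Real.rpow_nonneg dist_nonneg _)
          exact mul_le_mul_of_nonneg_right (le_max_right _ _) hΘ
  · -- branch 3 : α > 1
    intro hα1
    have hαp : 0 < αr := lt_trans one_pos hα1
    have hCCval : CC = (campanato d αr hαp).choose := by rw [hCC_def, dif_pos hαp]
    obtain ⟨hCp, hCspec⟩ := (campanato d αr hαp).choose_spec
    obtain ⟨b', hb'ae, hb'h⟩ := hCspec A hA0 b hbl (hosc1)
    have hconst := const_of_superholder αr ((campanato d αr hαp).choose * A) hα1 b'
      (fun x y => by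
        have := hb'h x y
        linarith [this])
    refine ⟨b' 0, ?_⟩
    filter_upwards [hb'ae] with x hx
    rw [hx]
    exact hconst x 0
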